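/- Let H be a Hilbert space, a: H × H → ℝ a bounded symmetric nonnegative bilinear form, and Q ⊆ H a finite-dimensional subspace such that a is coercive on the orthogonal complement Q⊥ (i.e., a(v,v) ≥ c‖v‖² for all v ∈ Q⊥, some c > 0). Then the saddle point problem: find (v, λ) ∈ H × Q with a(v,q) + ⟨λ, q⟩ = F(q) for all q ∈ H and ⟨v, μ⟩ = 0 for all μ ∈ Q, admits a unique solution for every bounded linear functional F on H. -/

import Mathlib

open RealInnerProductSpace

/-- abstract well-posedness of the saddle point problem with a
finite-dimensional multiplier space. `a` is a bounded symmetric nonnegative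
bilinear form on a Hilbert space `H`, coercive on the orthogonal complement of
a finite-dimensional subspace `Q`. Then for every bounded linear functional
`F`, the problem: find `(v, λ) ∈ H × Q` with `a(v,q) + ⟨λ,q⟩ = F(q)` for all
`q ∈ H` and `⟨v,μ⟩ = 0` for all `μ ∈ Q`, has a unique solution. -/
theorem stmt8 {H : Type*} [NormedAddCommGroup H] [InnerProductSpace ℝ H]
    [CompleteSpace H] (a : H → H → ℝ)
    (hlin₁ : ∀ (c : ℝ) (u u' v : H), a (c • u + u') v = c * a u v + a u' v)
    (hlin₂ : ∀ (c : ℝ) (u v v' : H), a u (c • v + v') = c * a u v + a u v')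
    (hsymm : ∀ u v, a u v = a v u)
    (hnonneg : ∀ v, 0 ≤ a v v)
    (hbdd : ∃ C, ∀ u v, |a u v| ≤ C * ‖u‖ * ‖v‖)
    (Q : Submodule ℝ H) [FiniteDimensional ℝ Q]
    (hcoer : ∃ c > 0, ∀ v : H, (∀ μ ∈ Q, (inner ℝ v μ : ℝ) = 0) →
      c * ‖v‖ ^ 2 ≤ a v v) :
    ∀ F : H →L[ℝ] ℝ, ∃! p : H × Q,
      (∀ q : H, a p.1 q + (inner ℝ (p.2 : H) q : ℝ) = F q) ∧
      (∀ μ ∈ Q, (inner ℝ p.1 μ : ℝ) = 0) := by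
  intro F
  obtain ⟨C, hC⟩ := hbdd
  obtain ⟨c, hc, hcoer⟩ := hcoer
  -- linearity consequences
  have a0l : ∀ v, a 0 v = 0 := by
    intro v
    have := hlin₁ 1 0 0 v
    simp at this
    linarith
  have haddl : ∀ u u' v, a (u + u') v = a u v + a u' v := by
    intro u u' v
    have := hlin₁ 1 u u' v
    simpa using this
  have hsmull : ∀ (s : ℝ) u v, a (s • u) v = s * a u v := by
    intro s u v
    have := hlin₁ s u 0 v
    simpa [a0l] using this
  have a0r : ∀ v, a v 0 = 0 := fun v => by rw [hsymm]; exact a0l v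
  have haddr : ∀ u v v', a u (v + v') = a u v + a u v' := by
    intro u v v'
    rw [hsymm, haddl, hsymm v, hsymm v']
  have hsmulr : ∀ (s : ℝ) u v, a u (s • v) = s * a u v := by
    intro s u v
    rw [hsymm, hsmull, hsymm]
  haveI : CompleteSpace Qᗮ := Q.isClosed_orthogonal.completeSpace_coe
  -- the bilinear form restricted to Qᗮ
  let bl : Qᗮ →ₗ[ℝ] Qᗮ →ₗ[ℝ] ℝ := LinearMap.mk₂ ℝ (fun u v => a u v)
    (fun u u' v => haddl u u' v) (fun s u v => hsmull s u v)
    (fun u v v' => haddr u v v') (fun s u v => hsmulr s u v)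
  let B : Qᗮ →L[ℝ] Qᗮ →L[ℝ] ℝ := LinearMap.mkContinuous₂ bl C
    (fun u v => by simpa [bl, Real.norm_eq_abs] using hC u v)
  have hBco : IsCoercive B := by
    refine ⟨c, hc, fun u => ?_⟩
    have hu : ∀ μ ∈ Q, (inner ℝ (u : H) μ : ℝ) = 0 := by
      intro μ hμ
      rw [real_inner_comm]
      exact u.2 μ hμ
    have := hcoer u hu
    calc c * ‖u‖ * ‖u‖ = c * ‖(u : H)‖ ^ 2 := by rw [Submodule.norm_coe]; ring
      _ ≤ a u u := this
      _ = B u u := rfl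
  let e := hBco.continuousLinearEquivOfBilin
  let v₀ : Qᗮ := e.symm ((InnerProductSpace.toDual ℝ Qᗮ).symm (F.comp Qᗮ.subtypeL))
  have hv₀ : ∀ w : Qᗮ, a v₀ w = F w := by
    intro w
    have h1 : (inner ℝ (e v₀) (w) : ℝ) = B v₀ w := hBco.continuousLinearEquivOfBilin_apply v₀ w
    have h2 : e v₀ = (InnerProductSpace.toDual ℝ Qᗮ).symm (F.comp Qᗮ.subtypeL) :=
      e.apply_symm_apply _
    rw [h2, InnerProductSpace.toDual_symm_apply] at h1
    exact h1.symm
  -- the functional q ↦ a v₀ q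
  let g : H →ₗ[ℝ] ℝ :=
    { toFun := fun q => a v₀ q
      map_add' := fun x y => haddr _ x y
      map_smul' := fun s x => hsmulr s _ x }
  let aF : H →L[ℝ] ℝ := g.mkContinuous (C * ‖(v₀ : H)‖)
    (fun q => by simpa [g, Real.norm_eq_abs, mul_assoc] using hC (v₀ : H) q)
  let y : H := (InnerProductSpace.toDual ℝ H).symm (F - aF)
  have hy : ∀ q : H, (inner ℝ (y) (q) : ℝ) = F q - a v₀ q := by
    intro q
    have h := InnerProductSpace.toDual_symm_apply (𝕜 := ℝ) (E := H)
      (x := q) (y := F - aF)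
    have haFq : aF q = a (v₀ : H) q := rfl
    rw [ContinuousLinearMap.sub_apply, haFq] at h
    exact h
  have hyQ : y ∈ Q := by
    rw [← Submodule.orthogonal_orthogonal Q]
    rw [Submodule.mem_orthogonal]
    intro w hw
    rw [real_inner_comm, hy]
    have := hv₀ ⟨w, hw⟩
    simp at this
    linarith
  refine ⟨((v₀ : H), ⟨y, hyQ⟩), ⟨?_, ?_⟩, ?_⟩
  · intro q
    have := hy q
    simp only
    linarith
  · intro μ hμ
    rw [real_inner_comm]
    exact v₀.2 μ hμ
  · rintro ⟨w, κ⟩ ⟨h1, h2⟩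
    have hwV : w ∈ Qᗮ := by
      rw [Submodule.mem_orthogonal]
      intro u hu
      rw [real_inner_comm]
      exact h2 u hu
    -- a w q = a v₀ q for q ∈ Qᗮ
    have key : ∀ q ∈ Qᗮ, a w q = a v₀ q := by
      intro q hq
      have hκq : (inner ℝ ((κ : H)) (q) : ℝ) = 0 := (Submodule.mem_orthogonal _ _).1 hq κ κ.2
      have hyq : (inner ℝ (y) (q) : ℝ) = 0 := (Submodule.mem_orthogonal _ _).1 hq y hyQ
      have e1 := h1 q
      have e2 := hy q
      simp only at e1
      rw [hκq] at e1
      rw [hyq] at e2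
      linarith
    have hwv : w = (v₀ : H) := by
      have hd : w - (v₀ : H) ∈ Qᗮ := Qᗮ.sub_mem hwV v₀.2
      have hdd : a (w - (v₀ : H)) (w - (v₀ : H)) = 0 := by
        have hrw : w - (v₀ : H) = (-1 : ℝ) • (v₀ : H) + w := by
          rw [neg_one_smul, sub_eq_neg_add]
        rw [hrw, hlin₁]
        have := key (w - (v₀ : H)) hd
        rw [hrw] at this
        linarith
      have hinner : ∀ μ ∈ Q, (inner ℝ (w - (v₀ : H)) (μ) : ℝ) = 0 := by
        intro μ hμ
        rw [real_inner_comm]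
        exact hd μ hμ
      have := hcoer _ hinner
      rw [hdd] at this
      have hn : ‖w - (v₀ : H)‖ ^ 2 ≤ 0 := by nlinarith
      have : ‖w - (v₀ : H)‖ = 0 := by nlinarith [norm_nonneg (w - (v₀ : H))]
      exact sub_eq_zero.1 (norm_eq_zero.1 this)
    have hκ : (κ : H) = y := by
      have hall : ∀ q : H, (inner ℝ ((κ : H) - y) (q) : ℝ) = 0 := by
        intro q
        have e1 := h1 q
        simp only at e1
        rw [hwv] at e1
        have e2 := hy q
        rw [inner_sub_left]
        linarith
      have := hall ((κ : H) - y)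
      exact sub_eq_zero.1 (inner_self_eq_zero.1 this)
    exact Prod.ext hwv (Subtype.ext hκ)
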